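/- For every integer r ≥ 1, the right-down diagonal sequence d_n^{(r)} = F_{n−r+2} · S(n, n−r+1) of the Fibonacci-Fubini triangle satisfies the linear recurrence with characteristic polynomial (x² − x − 1)^{2r−1}; that is, writing (x² − x − 1)^{2r−1} = Σ_{j=0}^{4r−2} c_{4r−2−j} x^{4r−2−j}, one has Σ_{j=0}^{4r−2} c_{4r−2−j} · d_{n−j}^{(r)} = 0 for all integers n ≥ 5r − 2. -/
import Mathlib

/-- Stirling numbers of the second kind. -/
def stirling2 : ℕ → ℕ → ℕ
  | 0, 0 => 1
  | 0, _ + 1 => 0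
  | _ + 1, 0 => 0
  | n + 1, k + 1 => stirling2 n k + (k + 1) * stirling2 n (k + 1)

/-- The `r`-th right-down diagonal of the Fibonacci-Fubini triangle:
`d_n^{(r)} = F_{n-r+2} · S(n, n-r+1)`. -/
def fibFubiniD (r n : ℕ) : ℕ := Nat.fib (n - r + 2) * stirling2 n (n - r + 1)

open Polynomial

lemma stirling2_succ (n k : ℕ) :
    stirling2 (n+1) (k+1) = stirling2 n k + (k+1) * stirling2 n (k+1) := rfl

lemma stirling2_of_lt : ∀ {n k : ℕ}, n < k → stirling2 n k = 0
  | 0, k+1, _ => rfl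
  | n+1, k+1, h => by
    rw [stirling2_succ, stirling2_of_lt (by omega), stirling2_of_lt (by omega)]
    ring

lemma stirling2_self : ∀ n, stirling2 n n = 1
  | 0 => rfl
  | n+1 => by
    rw [stirling2_succ, stirling2_self n, stirling2_of_lt (by omega)]
    ring

def shiftE : Module.End ℤ (ℕ → ℤ) where
  toFun f := fun s => f (s+1)
  map_add' _ _ := rfl
  map_smul' _ _ := rfl

@[simp] lemma shiftE_apply (f : ℕ → ℤ) (s : ℕ) : shiftE f s = f (s+1) := rfl

@[simp] lemma shiftE_pow_apply (k : ℕ) (f : ℕ → ℤ) (s : ℕ) :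
    (shiftE ^ k) f s = f (s + k) := by
  induction k generalizing f s with
  | zero => rfl
  | succ k ih =>
    rw [pow_succ, Module.End.mul_apply, ih]
    simp [Nat.add_assoc]

lemma aeval_mul_apply (P Q : ℤ[X]) (f : ℕ → ℤ) :
    Polynomial.aeval shiftE (P * Q) f = Polynomial.aeval shiftE P (Polynomial.aeval shiftE Q f) := by
  rw [map_mul, Module.End.mul_apply]

lemma aeval_Xsub1_apply (f : ℕ → ℤ) (s : ℕ) :
    Polynomial.aeval shiftE ((X : ℤ[X]) - 1) f s = f (s+1) - f s := by
  simp [map_sub, LinearMap.sub_apply]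

lemma aeval_quad_apply (c2 c1 c0 : ℤ) (f : ℕ → ℤ) (s : ℕ) :
    Polynomial.aeval shiftE (C c2 * X^2 + C c1 * X + C c0) f s
      = c2 * f (s+2) + c1 * f (s+1) + c0 * f s := by
  simp [map_add, map_mul, map_pow, LinearMap.add_apply, Module.End.mul_apply,
    Module.algebraMap_end_apply, smul_eq_mul]

/-- `f` is "polynomial of degree < m": the m-th finite difference vanishes. -/
def Dgood (m : ℕ) (f : ℕ → ℤ) : Prop :=
    Polynomial.aeval shiftE (((X : ℤ[X]) - 1)^m) f = 0

lemma Dgood_zero {f : ℕ → ℤ} (h : Dgood 0 f) : f = 0 := by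
  unfold Dgood at h
  simpa using h

lemma Dgood_of_eq {m : ℕ} {f g : ℕ → ℤ} (h : Dgood m f) (hfg : ∀ s, f s = g s) :
    Dgood m g := by
  have : f = g := funext hfg
  rwa [this] at h

lemma Dgood_dvd_apply {m : ℕ} {a : ℕ → ℤ} (ha : Dgood (m+1) a) {P : ℤ[X]}
    (hP : ((X : ℤ[X]) - 1) ∣ P) :
    Polynomial.aeval shiftE (((X : ℤ[X]) - 1)^m * P) a = 0 := by
  obtain ⟨P', rfl⟩ := hP
  have hpoly : ((X : ℤ[X]) - 1)^m * (((X : ℤ[X]) - 1) * P')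
      = P' * ((X : ℤ[X]) - 1)^(m+1) := by ring
  rw [hpoly, aeval_mul_apply, ha, map_zero]

lemma Dgood_add {m : ℕ} {f g : ℕ → ℤ} (hf : Dgood m f) (hg : Dgood m g) :
    Dgood m (fun s => f s + g s) := by
  unfold Dgood at *
  have : (fun s => f s + g s) = f + g := rfl
  rw [this, map_add, hf, hg, add_zero]

lemma Dgood_shift {m : ℕ} {f : ℕ → ℤ} (hf : Dgood m f) :
    Dgood m (fun s => f (s+1)) := by
  unfold Dgood at *
  have h1 : (fun s => f (s+1)) = Polynomial.aeval shiftE (X : ℤ[X]) f := by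
    simp only [Polynomial.aeval_X]
    rfl
  rw [h1, ← aeval_mul_apply, mul_comm, aeval_mul_apply, hf]
  simp

lemma Dgood_step {m : ℕ} {f g : ℕ → ℤ} (h1 : ∀ s, f (s+1) - f s = g s)
    (h2 : Dgood m g) : Dgood (m+1) f := by
  unfold Dgood at *
  rw [pow_succ, aeval_mul_apply]
  have : Polynomial.aeval shiftE ((X : ℤ[X]) - 1) f = g := by
    funext s
    rw [aeval_Xsub1_apply]
    exact h1 s
  rw [this, h2]

lemma Dgood_down {m : ℕ} {f : ℕ → ℤ} (h : Dgood (m+1) f) :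
    Dgood m (fun s => f (s+1) - f s) := by
  unfold Dgood at *
  have : (fun s => f (s+1) - f s) = Polynomial.aeval shiftE ((X : ℤ[X]) - 1) f := by
    funext s; rw [aeval_Xsub1_apply]
  rw [this, ← aeval_mul_apply, ← pow_succ, h]

lemma Dgood_mul_linear : ∀ (m : ℕ) (c : ℤ) (g : ℕ → ℤ), Dgood m g →
    Dgood (m+1) (fun s => ((s : ℤ) + c) * g s) := by
  intro m
  induction m with
  | zero =>
    intro c g hg
    have := Dgood_zero hg
    subst this
    apply Dgood_step (g := 0)
    · intro s; simp
    · unfold Dgood; simp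
  | succ m ih =>
    intro c g hg
    have hg' : Dgood m (fun s => g (s+1) - g s) := Dgood_down hg
    have h1 : Dgood (m+1) (fun s => ((s : ℤ) + c) * (g (s+1) - g s)) := ih c _ hg'
    have h2 : Dgood (m+1) (fun s => g (s+1)) := Dgood_shift hg
    refine Dgood_step (g := fun s => ((s : ℤ) + c) * (g (s+1) - g s) + g (s+1))
      (fun s => ?_) (Dgood_add h1 h2)
    push_cast
    ring

lemma Dgood_stirling : ∀ t : ℕ, Dgood (2*t+1) (fun s => (stirling2 (s+t+1) (s+1) : ℤ)) := by
  intro t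
  induction t with
  | zero =>
    apply Dgood_step (g := 0)
    · intro s
      simp [stirling2_self]
    · unfold Dgood; simp
  | succ t ih =>
    have key : ∀ s : ℕ, (stirling2 (s+1+(t+1)+1) (s+1+1) : ℤ) - stirling2 (s+(t+1)+1) (s+1)
        = ((s : ℤ) + 2) * (stirling2 (s+1+t+1) (s+1+1) : ℤ) := by
      intro s
      rw [show s+1+(t+1)+1 = (s+t+2)+1 from by omega,
          show s+(t+1)+1 = s+t+2 from by omega,
          show s+1+t+1 = s+t+2 from by omega,
          stirling2_succ (s+t+2) (s+1)]
      push_cast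
      ring
    have hq : Dgood (2*t+1) (fun s => (stirling2 (s+1+t+1) (s+1+1) : ℤ)) :=
      Dgood_shift (f := fun s => (stirling2 (s+t+1) (s+1) : ℤ)) ih
    have h1 : Dgood (2*t+2) (fun s => ((s : ℤ) + 2) * (stirling2 (s+1+t+1) (s+1+1) : ℤ)) :=
      Dgood_mul_linear _ 2 _ hq
    have := Dgood_step (m := 2*t+2) (f := fun s => (stirling2 (s+(t+1)+1) (s+1) : ℤ))
      (fun s => key s) h1
    rw [show 2*(t+1)+1 = 2*t+2+1 from by omega]
    exact this

lemma aeval_charQ_apply (f : ℕ → ℤ) (s : ℕ) :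
    Polynomial.aeval shiftE ((X : ℤ[X])^2 - X - C 1) f s = f (s+2) - f (s+1) - f s := by
  simp [map_sub, map_pow, LinearMap.sub_apply]

lemma Dgood_comb {m : ℕ} {a b : ℕ → ℤ} (ha : Dgood (m+1) a) (hb : Dgood (m+1) b)
    {P Q : ℤ[X]} (hP : ((X : ℤ[X]) - 1) ∣ P) (hQ : ((X : ℤ[X]) - 1) ∣ Q) :
    Dgood m (fun s => Polynomial.aeval shiftE P a s + Polynomial.aeval shiftE Q b s) := by
  unfold Dgood
  have : (fun s => Polynomial.aeval shiftE P a s + Polynomial.aeval shiftE Q b s)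
      = Polynomial.aeval shiftE P a + Polynomial.aeval shiftE Q b := rfl
  rw [this, map_add, ← aeval_mul_apply, ← aeval_mul_apply,
    Dgood_dvd_apply ha hP, Dgood_dvd_apply hb hQ, add_zero]

lemma fibMain : ∀ (m : ℕ) (a b : ℕ → ℤ), Dgood m a → Dgood m b →
    Polynomial.aeval shiftE (((X : ℤ[X])^2 - X - C 1)^m)
      (fun s => a s * (Nat.fib (s+1) : ℤ) + b s * (Nat.fib s : ℤ)) = 0 := by
  intro m
  induction m with
  | zero =>
    intro a b ha hb
    have ha0 := Dgood_zero ha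
    have hb0 := Dgood_zero hb
    subst ha0; subst hb0
    have : (fun s => (0 : ℕ → ℤ) s * (Nat.fib (s+1) : ℤ) + (0 : ℕ → ℤ) s * (Nat.fib s : ℤ))
        = (0 : ℕ → ℤ) := by funext s; simp
    rw [this, map_zero]
  | succ m ih =>
    intro a b ha hb
    set u : ℕ → ℤ := fun s => a s * (Nat.fib (s+1) : ℤ) + b s * (Nat.fib s : ℤ) with hu
    rw [pow_succ, aeval_mul_apply]
    -- the new coefficient functions
    set a' : ℕ → ℤ := fun s =>
      Polynomial.aeval shiftE (C 2 * X^2 + C (-1) * X + C (-1) : ℤ[X]) a s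
        + Polynomial.aeval shiftE (C 1 * X^2 + C (-1) * X + C 0 : ℤ[X]) b s with ha'
    set b' : ℕ → ℤ := fun s =>
      Polynomial.aeval shiftE (C 1 * X^2 + C (-1) * X + C 0 : ℤ[X]) a s
        + Polynomial.aeval shiftE (C 1 * X^2 + C 0 * X + C (-1) : ℤ[X]) b s with hb'
    have hda : Dgood m a' := by
      refine Dgood_comb ha hb ⟨C 2 * X + C 1, by simp only [map_neg, map_one, map_zero, map_ofNat]; ring⟩ ⟨X, by simp only [map_neg, map_one, map_zero, map_ofNat]; ring⟩
    have hdb : Dgood m b' := by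
      refine Dgood_comb ha hb ⟨X, by simp only [map_neg, map_one, map_zero, map_ofNat]; ring⟩ ⟨X + 1, by simp only [map_neg, map_one, map_zero, map_ofNat]; ring⟩
    have hv : Polynomial.aeval shiftE ((X : ℤ[X])^2 - X - C 1) u
        = fun s => a' s * (Nat.fib (s+1) : ℤ) + b' s * (Nat.fib s : ℤ) := by
      funext s
      rw [aeval_charQ_apply]
      simp only [ha', hb', aeval_quad_apply, hu]
      have h2 : (Nat.fib (s+2) : ℤ) = (Nat.fib s : ℤ) + (Nat.fib (s+1) : ℤ) := by
        rw [Nat.fib_add_two]; push_cast; ring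
      have h3 : (Nat.fib (s+3) : ℤ) = (Nat.fib (s+1) : ℤ) + (Nat.fib (s+2) : ℤ) := by
        rw [show s+3 = (s+1)+2 from rfl, Nat.fib_add_two]; push_cast; ring
      simp only [show s+1+1 = s+2 from rfl, show s+2+1 = s+3 from rfl]
      rw [h3, h2]
      ring
    rw [hv]
    exact ih a' b' hda hdb

open Finset Polynomial in
/-- The `r`-th right-down diagonal of the Fibonacci-Fubini triangle satisfies the linear
recurrence whose characteristic polynomial is `(x² - x - 1)^{2r-1}`. -/
theorem fibFubiniD_charPoly (r : ℕ) (hr : 1 ≤ r) (n : ℕ) (hn : 5 * r - 2 ≤ n) :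
    ∑ j ∈ range (4 * r - 1),
        ((Polynomial.X ^ 2 - Polynomial.X - Polynomial.C 1 : Polynomial ℤ) ^ (2 * r - 1)).coeff
            (4 * r - 2 - j) *
          (fibFubiniD r (n - j) : ℤ) = 0 := by
  obtain ⟨t, rfl⟩ : ∃ t, r = t + 1 := ⟨r - 1, by omega⟩
  rw [show 4 * (t+1) - 1 = 4*t+3 from by omega, show 2 * (t+1) - 1 = 2*t+1 from by omega]
  set P : ℤ[X] := ((X : ℤ[X])^2 - X - C 1)^(2*t+1) with hP
  set u : ℕ → ℤ := fun s => (fibFubiniD (t+1) (s + (t+1)) : ℤ) with hudef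
  -- the annihilation statement
  have hu0 : Polynomial.aeval shiftE P u = 0 := by
    have hst : Dgood (2*t+1) (fun s => (stirling2 (s+t+1) (s+1) : ℤ)) := Dgood_stirling t
    have := fibMain (2*t+1) _ _ hst hst
    refine Eq.trans ?_ this
    congr 1
    funext s
    simp only [hudef, fibFubiniD]
    rw [show s + (t+1) - (t+1) = s from by omega]
    rw [show s + 2 = s + 2 from rfl, Nat.fib_add_two]
    push_cast
    rw [show s + (t+1) = s + t + 1 from by omega]
    ring
  -- degree bound
  have hdeg : P.natDegree < 4*t+3 := by
    have h1 : ((X : ℤ[X])^2 - X - C 1).natDegree ≤ 2 := by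
      compute_degree
    calc P.natDegree ≤ (2*t+1) * ((X : ℤ[X])^2 - X - C 1).natDegree :=
          Polynomial.natDegree_pow_le
      _ ≤ (2*t+1) * 2 := by exact Nat.mul_le_mul_left _ h1
      _ < 4*t+3 := by omega
  set m : ℕ := n - (5*t+3) with hm
  have hkey : ∑ i ∈ range (4*t+3), P.coeff i * u (m + i) = 0 := by
    have hs := Polynomial.aeval_eq_sum_range' (x := shiftE) hdeg
    rw [hs] at hu0
    have := congrFun (congrArg (fun g : ℕ → ℤ => g) (by
      have : ((∑ i ∈ range (4*t+3), P.coeff i • shiftE ^ i)) u = 0 := hu0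
      exact this)) m
    rw [LinearMap.sum_apply] at this
    simpa [Finset.sum_apply, smul_eq_mul] using this
  calc ∑ j ∈ range (4*t+3), P.coeff (4*(t+1) - 2 - j) * (fibFubiniD (t+1) (n - j) : ℤ)
      = ∑ j ∈ range (4*t+3), P.coeff (4*t+3 - 1 - j) * u (m + (4*t+3 - 1 - j)) := by
        refine Finset.sum_congr rfl fun j hj => ?_
        have hj' : j ≤ 4*t+2 := by have := Finset.mem_range.mp hj; omega
        rw [show 4*(t+1) - 2 - j = 4*t+3-1-j from by omega]
        have harg : n - j = m + (4*t+3-1-j) + (t+1) := by omega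
        simp only [hudef]
        rw [harg]
    _ = ∑ i ∈ range (4*t+3), P.coeff i * u (m + i) :=
        Finset.sum_range_reflect (fun i => P.coeff i * u (m + i)) (4*t+3)
    _ = 0 := hkey
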